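/- For all n ≥ k ≥ 3, the coefficient of p^1 in Sf_{n,k}(p,1) equals C(k−1,2)·C(n−1,k), where C denotes the ordinary binomial coefficient. -/

import Mathlib

open Polynomial Finset

variable {R : Type*} [CommRing R]

/-- The p,q-Fibonacci polynomials: F_0 = 0, F_1 = q, F_2 = q^2,
    F_n = q*F_{n-1} + p*F_{n-2} for n ≥ 3. -/
def fibP (p q : R) : ℕ → R
  | 0 => 0
  | 1 => q
  | 2 => q ^ 2
  | n + 3 => q * fibP p q (n + 2) + p * fibP p q (n + 1)

/-- cf_{n,k}(p,q): cf_{0,0}=1, cf_{n,k}=0 if k>n or k<0,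
    cf_{n+1,k} = cf_{n,k-1} + F_n(p,q)*cf_{n,k}. -/
def cfP (p q : R) : ℕ → ℕ → R
  | 0, 0 => 1
  | 0, _ + 1 => 0
  | n + 1, 0 => fibP p q n * cfP p q n 0
  | n + 1, k + 1 => cfP p q n k + fibP p q n * cfP p q n (k + 1)

/-- Sf_{n,k}(p,q): Sf_{0,0}=1, Sf_{n,k}=0 if k>n or k<0,
    Sf_{n+1,k} = Sf_{n,k-1} + F_k(p,q)*Sf_{n,k}. -/
def SfP (p q : R) : ℕ → ℕ → R
  | 0, 0 => 1
  | 0, _ + 1 => 0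
  | n + 1, 0 => fibP p q 0 * SfP p q n 0
  | n + 1, k + 1 => SfP p q n k + fibP p q (k + 1) * SfP p q n (k + 1)

/-- sf_{n,k}(p,q): sf_{0,0}=1, sf_{n,k}=0 if k>n or k<0,
    sf_{n+1,k} = sf_{n,k-1} - F_n(p,q)*sf_{n,k}. -/
def sfP (p q : R) : ℕ → ℕ → R
  | 0, 0 => 1
  | 0, _ + 1 => 0
  | n + 1, 0 => - (fibP p q n * sfP p q n 0)
  | n + 1, k + 1 => sfP p q n k - fibP p q n * sfP p q n (k + 1)

lemma coeff_mul_one' (p q : Polynomial ℤ) :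
    (p*q).coeff 1 = p.coeff 0 * q.coeff 1 + p.coeff 1 * q.coeff 0 := by
  rw [coeff_mul, show Finset.HasAntidiagonal.antidiagonal 1 = {(0,1),(1,0)} from rfl]
  simp

lemma fib_coeff0 (m : ℕ) : (fibP (X : Polynomial ℤ) 1 m).coeff 0 = if m = 0 then 0 else 1 := by
  induction m using fibP.induct with
  | case1 => simp [fibP]
  | case2 => simp [fibP]
  | case3 => simp [fibP]
  | case4 n ih1 ih2 => simp [fibP, mul_coeff_zero, ih1]

lemma fib_coeff1 (m : ℕ) : (fibP (X : Polynomial ℤ) 1 m).coeff 1 = ((m - 2 : ℕ) : ℤ) := by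
  induction m using fibP.induct with
  | case1 => simp [fibP]
  | case2 => simp [fibP, coeff_one]
  | case3 => simp [fibP, coeff_one]
  | case4 n ih1 ih2 =>
    rw [fibP]
    rw [coeff_add, coeff_mul_one', coeff_mul_one', ih1, fib_coeff0]
    simp [coeff_one, fib_coeff0, show n + 2 - 2 = n from by omega,
      show n + 3 - 2 = n + 1 from by omega]

lemma SfP_zero_left (n : ℕ) : SfP (X : Polynomial ℤ) 1 (n + 1) 0 = 0 := by
  rw [SfP, fibP]; ring

lemma SfP_coeff0 (n k : ℕ) :
    (SfP (X : Polynomial ℤ) 1 (n+1) (k+1)).coeff 0 = (n.choose k : ℤ) := by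
  induction n generalizing k with
  | zero =>
    cases k with
    | zero => simp [SfP]
    | succ k => simp [SfP, mul_coeff_zero]
  | succ n ih =>
    rw [SfP, coeff_add, mul_coeff_zero, fib_coeff0, ih]
    cases k with
    | zero => simp [SfP_zero_left, ih]
    | succ k =>
      rw [ih]
      simp only [Nat.succ_ne_zero, if_false, one_mul, Nat.choose_succ_succ]
      push_cast
      ring

lemma SfP_coeff1 (n k : ℕ) :
    (SfP (X : Polynomial ℤ) 1 (n+1) (k+1)).coeff 1 = (k.choose 2 * n.choose (k+1) : ℤ) := by
  induction n generalizing k with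
  | zero =>
    cases k with
    | zero => simp [SfP, coeff_one]
    | succ k => simp [SfP]
  | succ n ih =>
    rw [SfP, coeff_add, coeff_mul_one', fib_coeff0, fib_coeff1, ih, SfP_coeff0]
    cases k with
    | zero => simp [SfP_zero_left]
    | succ k =>
      rw [ih]
      have h1 : (k + 1 + 1 - 2 : ℕ) = k := by omega
      rw [h1]
      have h2 : (k+1).choose 2 = k.choose 2 + k := by
        rw [Nat.choose_succ_succ]; simp [Nat.choose_one_right]; ring
      have h3 : (n+1).choose (k+2) = n.choose (k+1) + n.choose (k+2) := Nat.choose_succ_succ _ _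
      push_cast [h2, h3]
      ring

theorem SfP_coeff_p_one (n k : ℕ) (hk : 3 ≤ k) (hkn : k ≤ n) :
    (SfP (Polynomial.X : Polynomial ℤ) 1 n k).coeff 1 =
      ((k - 1).choose 2 * (n - 1).choose k : ℤ) := by
  obtain ⟨n, rfl⟩ : ∃ m, n = m + 1 := ⟨n - 1, by omega⟩
  obtain ⟨k, rfl⟩ : ∃ m, k = m + 1 := ⟨k - 1, by omega⟩
  rw [SfP_coeff1]
  simp
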